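/- Let φ ≥ 26 and 0 < ε ≤ 1/φ. There exist probability distributions on [0,1] for the weights w_{11}, w_{12}, w_{21}, w_{22} of K_{2,2}, each with probability density bounded from above by φ (namely w_{11} uniform on [1−1/φ, 1], w_{12} and w_{21} uniform on (23/26, 23/26+1/φ], and w_{22} uniform on [20/26−1/φ, 20/26+3/φ], all independent), such that the probability of the event E^φ_ε is at least εφ/4. -/

import Mathlib

open MeasureTheory
open scoped ENNReal

/-- The uniform distribution on the interval `[a, b]`. -/
noncomputable def unifIcc (a b : ℝ) : Measure ℝ :=
  (ENNReal.ofReal (b - a))⁻¹ • (volume : Measure ℝ).restrict (Set.Icc a b)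

/-- The uniform distribution on the interval `(a, b]`. -/
noncomputable def unifIoc (a b : ℝ) : Measure ℝ :=
  (ENNReal.ofReal (b - a))⁻¹ • (volume : Measure ℝ).restrict (Set.Ioc a b)

lemma unifIcc_apply (a b : ℝ) {s : Set ℝ} (hs : MeasurableSet s) :
    unifIcc a b s = (ENNReal.ofReal (b - a))⁻¹ * volume (s ∩ Set.Icc a b) := by
  rw [unifIcc, Measure.smul_apply, Measure.restrict_apply hs, smul_eq_mul]

lemma unifIoc_apply (a b : ℝ) {s : Set ℝ} (hs : MeasurableSet s) :
    unifIoc a b s = (ENNReal.ofReal (b - a))⁻¹ * volume (s ∩ Set.Ioc a b) := by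
  rw [unifIoc, Measure.smul_apply, Measure.restrict_apply hs, smul_eq_mul]

lemma unifIcc_prob {a b : ℝ} (h : a < b) : IsProbabilityMeasure (unifIcc a b) := by
  constructor
  rw [unifIcc_apply _ _ MeasurableSet.univ, Set.univ_inter, Real.volume_Icc]
  exact ENNReal.inv_mul_cancel (by simp [sub_pos.2 h, not_le.2 h]) ENNReal.ofReal_ne_top

lemma unifIoc_prob {a b : ℝ} (h : a < b) : IsProbabilityMeasure (unifIoc a b) := by
  constructor
  rw [unifIoc_apply _ _ MeasurableSet.univ, Set.univ_inter, Real.volume_Ioc]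
  exact ENNReal.inv_mul_cancel (by simp [sub_pos.2 h, not_le.2 h]) ENNReal.ofReal_ne_top

lemma unifIcc_self {a b : ℝ} (h : a < b) : unifIcc a b (Set.Icc a b) = 1 := by
  rw [unifIcc_apply _ _ measurableSet_Icc, Set.inter_self, Real.volume_Icc]
  exact ENNReal.inv_mul_cancel (by simp [sub_pos.2 h, not_le.2 h]) ENNReal.ofReal_ne_top

lemma unifIoc_self {a b : ℝ} (h : a < b) : unifIoc a b (Set.Ioc a b) = 1 := by
  rw [unifIoc_apply _ _ measurableSet_Ioc, Set.inter_self, Real.volume_Ioc]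
  exact ENNReal.inv_mul_cancel (by simp [sub_pos.2 h, not_le.2 h]) ENNReal.ofReal_ne_top

lemma unifIcc_le (a b : ℝ) (h : 0 < b - a) (s : Set ℝ) :
    unifIcc a b s ≤ ENNReal.ofReal (b - a)⁻¹ * volume s := by
  rw [unifIcc, Measure.smul_apply, smul_eq_mul, ENNReal.ofReal_inv_of_pos h]
  exact mul_le_mul_right (Measure.restrict_apply_le _ _) _

lemma unifIoc_le (a b : ℝ) (h : 0 < b - a) (s : Set ℝ) :
    unifIoc a b s ≤ ENNReal.ofReal (b - a)⁻¹ * volume s := by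
  rw [unifIoc, Measure.smul_apply, smul_eq_mul, ENNReal.ofReal_inv_of_pos h]
  exact mul_le_mul_right (Measure.restrict_apply_le _ _) _

lemma unifIcc_compl (a b : ℝ) (h : Set.Icc a b ⊆ Set.Icc (0:ℝ) 1) :
    unifIcc a b (Set.Icc (0:ℝ) 1)ᶜ = 0 := by
  rw [unifIcc_apply _ _ measurableSet_Icc.compl]
  have : (Set.Icc (0:ℝ) 1)ᶜ ∩ Set.Icc a b = ∅ := by
    rw [Set.eq_empty_iff_forall_notMem]; rintro x ⟨hx1, hx2⟩; exact hx1 (h hx2)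
  simp [this]

lemma unifIoc_compl (a b : ℝ) (h : Set.Ioc a b ⊆ Set.Icc (0:ℝ) 1) :
    unifIoc a b (Set.Icc (0:ℝ) 1)ᶜ = 0 := by
  rw [unifIoc_apply _ _ measurableSet_Icc.compl]
  have : (Set.Icc (0:ℝ) 1)ᶜ ∩ Set.Ioc a b = ∅ := by
    rw [Set.eq_empty_iff_forall_notMem]; rintro x ⟨hx1, hx2⟩; exact hx1 (h hx2)
  simp [this]


/-- The smoothed weight distributions on `K_{2,2}`: `w₁₁ ~ U[1-1/φ, 1]`,
`w₁₂, w₂₁ ~ U(23/26, 23/26+1/φ]` and `w₂₂ ~ U[20/26-1/φ, 20/26+3/φ]`, independent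
(indexed so that `w (i, j)` is the weight `w_{(i+1)(j+1)}`). -/
noncomputable def smoothedK22Marginal (φ : ℝ) (p : Fin 2 × Fin 2) : Measure ℝ :=
  if p.1 = 0 then
    if p.2 = 0 then unifIcc (1 - 1 / φ) 1 else unifIoc (23 / 26) (23 / 26 + 1 / φ)
  else
    if p.2 = 0 then unifIoc (23 / 26) (23 / 26 + 1 / φ)
    else unifIcc (20 / 26 - 1 / φ) (20 / 26 + 3 / φ)

set_option maxHeartbeats 1000000 in
/-- **Probability of the event `E^φ_ε`.** Let `φ ≥ 26` and `0 < ε ≤ 1/φ`. The smoothed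
weight distributions above are probability distributions on `[0,1]` with densities
bounded by `φ`, and under them the probability of the event `E^φ_ε`, i.e. that
`w₁₁ ∈ [1-1/φ, 1]`, `w₁₂, w₂₁ ∈ (23/26, 23/26+1/φ]` and
`w₂₂ ∈ [w₁₂ + w₂₁ - w₁₁ - ε, w₁₂ + w₂₁ - w₁₁)`, is at least `ε·φ/4`. -/
theorem prob_event_E_phi_eps (φ ε : ℝ) (hφ : 26 ≤ φ) (hε₀ : 0 < ε) (hε₁ : ε ≤ 1 / φ) :
    (∀ p : Fin 2 × Fin 2, IsProbabilityMeasure (smoothedK22Marginal φ p)) ∧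
    (∀ p : Fin 2 × Fin 2, smoothedK22Marginal φ p (Set.Icc (0 : ℝ) 1)ᶜ = 0) ∧
    (∀ (p : Fin 2 × Fin 2) (s : Set ℝ),
      smoothedK22Marginal φ p s ≤ ENNReal.ofReal φ * volume s) ∧
    ENNReal.ofReal (ε * φ / 4) ≤
      Measure.pi (smoothedK22Marginal φ)
        {w : Fin 2 × Fin 2 → ℝ |
          w (0, 0) ∈ Set.Icc (1 - 1 / φ) 1 ∧
          w (0, 1) ∈ Set.Ioc (23 / 26 : ℝ) (23 / 26 + 1 / φ) ∧
          w (1, 0) ∈ Set.Ioc (23 / 26 : ℝ) (23 / 26 + 1 / φ) ∧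
          w (1, 1) ∈ Set.Ico (w (0, 1) + w (1, 0) - w (0, 0) - ε)
            (w (0, 1) + w (1, 0) - w (0, 0))} := by
  have hφ0 : (0:ℝ) < φ := by linarith
  have hφinv : (0:ℝ) < 1/φ := by positivity
  have hinvle : 1/φ ≤ 1/26 := by apply one_div_le_one_div_of_le <;> linarith
  have e3 : (3:ℝ)/φ = 3*(1/φ) := by ring
  have e4 : (4:ℝ)/φ = 4*(1/φ) := by ring
  have hprob0 : ∀ p : Fin 2 × Fin 2, IsProbabilityMeasure (smoothedK22Marginal φ p) := by
    rintro ⟨i, j⟩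
    fin_cases i <;> fin_cases j
    · exact unifIcc_prob (by linarith)
    · exact unifIoc_prob (by linarith)
    · exact unifIoc_prob (by linarith)
    · exact unifIcc_prob (by linarith)
  have hsupp : ∀ p : Fin 2 × Fin 2, smoothedK22Marginal φ p (Set.Icc (0:ℝ) 1)ᶜ = 0 := by
    rintro ⟨i, j⟩
    fin_cases i <;> fin_cases j
    · exact unifIcc_compl _ _ (Set.Icc_subset_Icc (by linarith) le_rfl)
    · exact unifIoc_compl _ _ (fun x hx => ⟨by have := hx.1; linarith, by have := hx.2; linarith⟩)
    · exact unifIoc_compl _ _ (fun x hx => ⟨by have := hx.1; linarith, by have := hx.2; linarith⟩)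
    · exact unifIcc_compl _ _ (Set.Icc_subset_Icc (by linarith) (by linarith))
  have hdens : ∀ (p : Fin 2 × Fin 2) (s : Set ℝ),
      smoothedK22Marginal φ p s ≤ ENNReal.ofReal φ * volume s := by
    have h1 : (1 - (1 - 1/φ))⁻¹ = φ := by
      have h : (1:ℝ) - (1 - 1/φ) = 1/φ := by ring
      rw [h, one_div, inv_inv]
    have h2 : ((23/26 + 1/φ) - 23/26)⁻¹ = φ := by
      rw [add_sub_cancel_left, one_div, inv_inv]
    have h3 : ((20/26 + 3/φ) - (20/26 - 1/φ))⁻¹ ≤ φ := by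
      have h : (20:ℝ)/26 + 3/φ - (20/26 - 1/φ) = 4/φ := by ring
      rw [h, inv_div]
      linarith
    rintro ⟨i, j⟩ s
    fin_cases i <;> fin_cases j
    · exact le_trans (unifIcc_le _ _ (by linarith) s) (by rw [h1])
    · exact le_trans (unifIoc_le _ _ (by linarith) s) (by rw [h2])
    · exact le_trans (unifIoc_le _ _ (by linarith) s) (by rw [h2])
    · refine le_trans (unifIcc_le _ _ (by linarith) s) ?_
      exact mul_le_mul_left (ENNReal.ofReal_le_ofReal h3) _
  refine ⟨hprob0, hsupp, hdens, ?_⟩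
  classical
  have hφ0 : (0:ℝ) < φ := by linarith
  have hφinv : (0:ℝ) < 1/φ := by positivity
  have hinvle : 1/φ ≤ 1/26 := by apply one_div_le_one_div_of_le <;> linarith
  have e3 : (3:ℝ)/φ = 3*(1/φ) := by ring
  set μ := smoothedK22Marginal φ with hμ
  have hprob : ∀ p : Fin 2 × Fin 2, IsProbabilityMeasure (μ p) := by
    rintro ⟨i, j⟩
    fin_cases i <;> fin_cases j
    · exact unifIcc_prob (by linarith)
    · exact unifIoc_prob (by linarith)
    · exact unifIoc_prob (by linarith)
    · exact unifIcc_prob (by linarith)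
  haveI : ∀ p, SigmaFinite (μ p) := fun p => by haveI := hprob p; infer_instance
  set A : Set ℝ := Set.Icc (1 - 1/φ) 1 with hA
  set B : Set ℝ := Set.Ioc (23/26 : ℝ) (23/26 + 1/φ) with hB
  have hAm : MeasurableSet A := measurableSet_Icc
  have hBm : MeasurableSet B := measurableSet_Ioc
  set S : Set (Fin 2 × Fin 2 → ℝ) :=
    {w : Fin 2 × Fin 2 → ℝ | w (0,0) ∈ A ∧ w (0,1) ∈ B ∧ w (1,0) ∈ B ∧
      w (1,1) ∈ Set.Ico (w (0,1) + w (1,0) - w (0,0) - ε)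
        (w (0,1) + w (1,0) - w (0,0))} with hS
  have hSm : MeasurableSet S := by
    have m00 : Measurable fun w : Fin 2 × Fin 2 → ℝ => w (0,0) := measurable_pi_apply _
    have m01 : Measurable fun w : Fin 2 × Fin 2 → ℝ => w (0,1) := measurable_pi_apply _
    have m10 : Measurable fun w : Fin 2 × Fin 2 → ℝ => w (1,0) := measurable_pi_apply _
    have m11 : Measurable fun w : Fin 2 × Fin 2 → ℝ => w (1,1) := measurable_pi_apply _
    refine (m00 hAm).inter ((m01 hBm).inter ((m10 hBm).inter ?_))
    exact (measurableSet_le (((m01.add m10).sub m00).sub measurable_const) m11).inter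
      (measurableSet_lt m11 ((m01.add m10).sub m00))
  set F : (Fin 2 × Fin 2 → ℝ) → ℝ≥0∞ := S.indicator 1 with hF
  have hFm : Measurable F := measurable_one.indicator hSm
  set c : ℝ≥0∞ := ENNReal.ofReal (ε * φ / 4) with hc
  have hfac : ∀ w : Fin 2 × Fin 2 → ℝ, F w =
      A.indicator 1 (w (0,0)) * (B.indicator 1 (w (0,1)) * (B.indicator 1 (w (1,0)) *
      (Set.Ico (w (0,1) + w (1,0) - w (0,0) - ε) (w (0,1) + w (1,0) - w (0,0))).indicator
        1 (w (1,1)))) := by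
    intro w
    by_cases h1 : w (0,0) ∈ A <;> by_cases h2 : w (0,1) ∈ B <;> by_cases h3 : w (1,0) ∈ B <;>
      by_cases h4 : w (1,1) ∈ Set.Ico (w (0,1) + w (1,0) - w (0,0) - ε)
        (w (0,1) + w (1,0) - w (0,0)) <;>
      simp [hF, hS, Set.indicator_apply, Set.mem_setOf_eq, h1, h2, h3, h4,
        -Prod.mk_zero_zero, -Prod.mk_one_one]
    · obtain ⟨h4a, h4b⟩ := h4
      constructor <;> linarith
    · rw [Set.mem_Ico, not_and, not_lt] at h4
      intro hle
      linarith [h4 (by linarith)]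
  have hcond : ∀ a₀ b₀ c₀ : ℝ, a₀ ∈ A → b₀ ∈ B → c₀ ∈ B →
      μ (1,1) (Set.Ico (b₀ + c₀ - a₀ - ε) (b₀ + c₀ - a₀)) = c := by
    intro a₀ b₀ c₀ ha hb hcm
    obtain ⟨ha1, ha2⟩ := ha
    obtain ⟨hb1, hb2⟩ := hb
    obtain ⟨hc1, hc2⟩ := hcm
    have hsub : Set.Ico (b₀ + c₀ - a₀ - ε) (b₀ + c₀ - a₀) ⊆
        Set.Icc (20/26 - 1/φ) (20/26 + 3/φ) := by
      rintro y ⟨hy1, hy2⟩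
      constructor <;> [linarith; linarith]
    have h11 : μ (1,1) = unifIcc (20/26 - 1/φ) (20/26 + 3/φ) := rfl
    rw [h11, unifIcc_apply _ _ measurableSet_Ico, Set.inter_eq_self_of_subset_left hsub,
      Real.volume_Ico]
    have h4 : (20:ℝ)/26 + 3/φ - (20/26 - 1/φ) = 4/φ := by ring
    have h5 : b₀ + c₀ - a₀ - (b₀ + c₀ - a₀ - ε) = ε := by ring
    rw [h4, h5, ← ENNReal.ofReal_inv_of_pos (by positivity), inv_div,
      ← ENNReal.ofReal_mul (by positivity)]
    rw [hc]
    congr 1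
    ring
  have hne1 : ((0,0) : Fin 2 × Fin 2) ≠ (1,1) := by decide
  have hne2 : ((0,1) : Fin 2 × Fin 2) ≠ (1,1) := by decide
  have hne3 : ((1,0) : Fin 2 × Fin 2) ≠ (1,1) := by decide
  set T : Finset (Fin 2 × Fin 2) := {(0,0), (0,1), (1,0)} with hT
  have hUniv : (Finset.univ : Finset (Fin 2 × Fin 2)) = insert (1,1) T := by decide
  set x₀ : Fin 2 × Fin 2 → ℝ := fun _ => 0 with hx₀
  have hμ00A : μ (0,0) A = 1 := by
    have h : μ (0,0) = unifIcc (1 - 1/φ) 1 := rfl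
    rw [h, hA]; exact unifIcc_self (by linarith)
  have hμ01B : μ (0,1) B = 1 := by
    have h : μ (0,1) = unifIoc (23/26) (23/26 + 1/φ) := rfl
    rw [h, hB]; exact unifIoc_self (by linarith)
  have hμ10B : μ (1,0) B = 1 := by
    have h : μ (1,0) = unifIoc (23/26) (23/26 + 1/φ) := rfl
    rw [h, hB]; exact unifIoc_self (by linarith)
  set g : (Fin 2 × Fin 2 → ℝ) → ℝ≥0∞ := fun x =>
    A.indicator 1 (x (0,0)) * (B.indicator 1 (x (0,1)) * (B.indicator 1 (x (1,0)) * c))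
    with hg
  set g₁ : (Fin 2 × Fin 2 → ℝ) → ℝ≥0∞ := fun x =>
    B.indicator 1 (x (0,1)) * (B.indicator 1 (x (1,0)) * c) with hg₁
  set g₂ : (Fin 2 × Fin 2 → ℝ) → ℝ≥0∞ := fun x => B.indicator 1 (x (1,0)) * c with hg₂
  have mA : Measurable (A.indicator (1 : ℝ → ℝ≥0∞)) := measurable_one.indicator hAm
  have mB : Measurable (B.indicator (1 : ℝ → ℝ≥0∞)) := measurable_one.indicator hBm
  have hgm : Measurable g :=
    (mA.comp (measurable_pi_apply _)).mul ((mB.comp (measurable_pi_apply _)).mul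
      ((mB.comp (measurable_pi_apply _)).mul measurable_const))
  have hg₁m : Measurable g₁ :=
    (mB.comp (measurable_pi_apply _)).mul ((mB.comp (measurable_pi_apply _)).mul
      measurable_const)
  have hg₂m : Measurable g₂ := (mB.comp (measurable_pi_apply _)).mul measurable_const
  -- pointwise bound
  have hkey : g ≤ fun x => ∫⁻ y, F (Function.update x (1,1) y) ∂ μ (1,1) := by
    intro x
    by_cases h1 : x (0,0) ∈ A
    case neg =>
      have hz : g x = 0 := by simp only [hg, Set.indicator_of_notMem h1, zero_mul]
      rw [hz]; exact zero_le
    by_cases h2 : x (0,1) ∈ B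
    case neg =>
      have hz : g x = 0 := by
        simp only [hg, Set.indicator_of_notMem h2, zero_mul, mul_zero]
      rw [hz]; exact zero_le
    by_cases h3 : x (1,0) ∈ B
    case neg =>
      have hz : g x = 0 := by
        simp only [hg, Set.indicator_of_notMem h3, zero_mul, mul_zero]
      rw [hz]; exact zero_le
    have heval : ∀ y : ℝ, F (Function.update x (1,1) y) =
        (Set.Ico (x (0,1) + x (1,0) - x (0,0) - ε)
          (x (0,1) + x (1,0) - x (0,0))).indicator 1 y := by
      intro y
      rw [hfac, Function.update_of_ne hne1, Function.update_of_ne hne2,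
        Function.update_of_ne hne3, Function.update_self,
        Set.indicator_of_mem h1, Set.indicator_of_mem h2, Set.indicator_of_mem h3]
      simp
    simp only [heval]
    rw [lintegral_indicator_one measurableSet_Ico, hcond _ _ _ h1 h2 h3]
    simp only [hg, Set.indicator_of_mem h1, Set.indicator_of_mem h2, Set.indicator_of_mem h3,
      Pi.one_apply, one_mul]
    exact le_rfl
  -- peeling
  have s1 : lmarginal μ T g = lmarginal μ ({(0,1), (1,0)} : Finset (Fin 2 × Fin 2)) g₁ := by
    have hins : T = insert (0,0) ({(0,1), (1,0)} : Finset (Fin 2 × Fin 2)) := rfl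
    have he : (fun x => ∫⁻ y, g (Function.update x (0,0) y) ∂ μ (0,0)) = g₁ := by
      funext x
      show (∫⁻ y, g (Function.update x (0,0) y) ∂ μ (0,0)) = g₁ x
      have hupd : ∀ y : ℝ, g (Function.update x (0,0) y) = A.indicator 1 y * g₁ x := by
        intro y
        simp only [hg, hg₁, Function.update_self,
          Function.update_of_ne (show ((0,1) : Fin 2 × Fin 2) ≠ (0,0) by decide),
          Function.update_of_ne (show ((1,0) : Fin 2 × Fin 2) ≠ (0,0) by decide)]
      simp only [hupd]
      rw [lintegral_mul_const _ mA, lintegral_indicator_one hAm, hμ00A, one_mul]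
    rw [hins, lmarginal_insert' _ hgm (by decide), he]
  have s2 : lmarginal μ ({(0,1), (1,0)} : Finset (Fin 2 × Fin 2)) g₁ =
      lmarginal μ ({(1,0)} : Finset (Fin 2 × Fin 2)) g₂ := by
    have hins : ({(0,1), (1,0)} : Finset (Fin 2 × Fin 2)) =
        insert (0,1) ({(1,0)} : Finset (Fin 2 × Fin 2)) := rfl
    have he : (fun x => ∫⁻ y, g₁ (Function.update x (0,1) y) ∂ μ (0,1)) = g₂ := by
      funext x
      show (∫⁻ y, g₁ (Function.update x (0,1) y) ∂ μ (0,1)) = g₂ x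
      have hupd : ∀ y : ℝ, g₁ (Function.update x (0,1) y) = B.indicator 1 y * g₂ x := by
        intro y
        simp only [hg₁, hg₂, Function.update_self,
          Function.update_of_ne (show ((1,0) : Fin 2 × Fin 2) ≠ (0,1) by decide)]
      simp only [hupd]
      rw [lintegral_mul_const _ mB, lintegral_indicator_one hBm, hμ01B, one_mul]
    rw [hins, lmarginal_insert' _ hg₁m (by decide), he]
  have s3 : lmarginal μ ({(1,0)} : Finset (Fin 2 × Fin 2)) g₂ = fun _ => c := by
    have hins : ({(1,0)} : Finset (Fin 2 × Fin 2)) =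
        insert (1,0) (∅ : Finset (Fin 2 × Fin 2)) := rfl
    rw [hins, lmarginal_insert' _ hg₂m (by decide), lmarginal_empty]
    funext x
    have hupd : ∀ y : ℝ, g₂ (Function.update x (1,0) y) = B.indicator 1 y * c := by
      intro y
      simp only [hg₂, Function.update_self]
    simp only [hupd]
    rw [lintegral_mul_const _ mB, lintegral_indicator_one hBm, hμ10B, one_mul]
  calc ENNReal.ofReal (ε * φ / 4)
      = lmarginal μ T g x₀ := by rw [s1, s2, s3]
    _ ≤ lmarginal μ T (fun x => ∫⁻ y, F (Function.update x (1,1) y) ∂ μ (1,1)) x₀ :=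
        lmarginal_mono hkey x₀
    _ = lmarginal μ Finset.univ F x₀ := by
        rw [hUniv, lmarginal_insert' _ hFm (by decide)]
    _ = ∫⁻ w, F w ∂ Measure.pi μ := (lintegral_eq_lmarginal_univ x₀).symm
    _ = Measure.pi μ S := lintegral_indicator_one hSm
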